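/- Let (p_n)_{n≥1} ⊆ [1,∞) and (σ_n)_{n≥1} ⊆ ℝ with inf_n σ_n < sup_n σ_n. Assume that the series Σ_{n≥1} p_n e^{σ_n x} diverges for every x ∈ ℝ. Then for each W ∈ {E_BE, E_MB, E_FD}, H_W(u,v) = −∞ for every (u,v) in the interior of dom H_W. -/

import Mathlib

open Filter

/-- The Bose–Einstein entropy, with values in `ℝ ∪ {+∞}`. -/
noncomputable def EBEe (u : ℝ) : EReal :=
  if 0 ≤ u then ((u * Real.log u - (1 + u) * Real.log (1 + u) : ℝ) : EReal) else ⊤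

/-- The Maxwell–Boltzmann entropy, with values in `ℝ ∪ {+∞}`. -/
noncomputable def EMBe (u : ℝ) : EReal :=
  if 0 ≤ u then ((u * (Real.log u - 1) : ℝ) : EReal) else ⊤

/-- The Fermi–Dirac entropy, with values in `ℝ ∪ {+∞}`. -/
noncomputable def EFDe (u : ℝ) : EReal :=
  if 0 ≤ u ∧ u ≤ 1 then ((u * Real.log u + (1 - u) * Real.log (1 - u) : ℝ) : EReal) else ⊤

/-- The sum of a series in `ℝ ∪ {±∞}`, following the paper's convention: the limit of the
partial sums when this limit exists in `[−∞,+∞]`, and `+∞` otherwise. -/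
noncomputable def serSum (β : ℕ → EReal) : EReal :=
  @dite _ (∃ l : EReal, Tendsto (fun N => ∑ k ∈ Finset.range N, β k) atTop (nhds l))
    (Classical.dec _) (fun h => h.choose) (fun _ => ⊤)

/-- `S(u,v)`: the set of sequences of nonnegative reals with `Σ u_n = u` and `Σ σ_n u_n = v`
(sums as limits of partial sums). -/
def Sfeas (σ : ℕ → ℝ) (u v : ℝ) : Set (ℕ → ℝ) :=
  {w | (∀ n, 0 ≤ w n) ∧
    Tendsto (fun N => ∑ k ∈ Finset.range N, w k) atTop (nhds u) ∧
    Tendsto (fun N => ∑ k ∈ Finset.range N, σ k * w k) atTop (nhds v)}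

/-- The value (marginal) function `H_W(u,v) = inf { Σ p_n W(u_n/p_n) : (u_n) ∈ S(u,v) }`,
with `inf ∅ = +∞`. -/
noncomputable def Hval (p σ : ℕ → ℝ) (W : ℝ → EReal) (u v : ℝ) : EReal :=
  sInf ((fun w => serSum fun n => (p n : EReal) * W (w n / p n)) '' Sfeas σ u v)


section Aux
open Real Set

-- convexity of the three entropies
lemma convMB : ConvexOn ℝ (Set.Ici (0:ℝ)) (fun t => t * (Real.log t - 1)) := by
  have h : (fun t : ℝ => t * (Real.log t - 1)) = fun t => t * Real.log t - t := by
    funext t; ring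
  rw [h]
  exact Real.convexOn_mul_log.sub (concaveOn_id (convex_Ici 0))

lemma convBE : ConvexOn ℝ (Set.Ici (0:ℝ))
    (fun t => t * Real.log t - (1 + t) * Real.log (1 + t)) := by
  have hc : Continuous (fun t : ℝ => t * Real.log t - (1 + t) * Real.log (1 + t)) := by
    exact Real.continuous_mul_log.sub
      (Real.continuous_mul_log.comp (continuous_const.add continuous_id))
  have hder : ∀ x ∈ interior (Set.Ici (0:ℝ)),
      HasDerivAt (fun t => t * Real.log t - (1 + t) * Real.log (1 + t))
        (Real.log x - Real.log (1 + x)) x := by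
    intro x hx
    rw [interior_Ici, mem_Ioi] at hx
    have h1 : HasDerivAt (fun t : ℝ => t * Real.log t) (Real.log x + 1) x :=
      Real.hasDerivAt_mul_log hx.ne'
    have h2 : HasDerivAt (fun t : ℝ => (1 + t) * Real.log (1 + t))
        ((Real.log (1 + x) + 1) * 1) x := by
      have hin : HasDerivAt (fun t : ℝ => 1 + t) 1 x := by
        simpa using (hasDerivAt_id x).const_add 1
      exact (Real.hasDerivAt_mul_log (by positivity : (1:ℝ) + x ≠ 0)).comp x hin
    have := h1.sub h2
    exact this.congr_deriv (by ring)
  have hdiff : DifferentiableOn ℝ (fun t => t * Real.log t - (1 + t) * Real.log (1 + t))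
      (interior (Set.Ici (0:ℝ))) := fun x hx => (hder x hx).differentiableAt.differentiableWithinAt
  refine MonotoneOn.convexOn_of_deriv (convex_Ici 0) hc.continuousOn hdiff ?_
  intro a ha b hb hab
  rw [(hder a ha).deriv, (hder b hb).deriv]
  rw [interior_Ici, mem_Ioi] at ha hb
  have h1a : (0:ℝ) < 1 + a := by linarith
  have h1b : (0:ℝ) < 1 + b := by linarith
  rw [sub_le_sub_iff, ← Real.log_mul ha.ne' h1b.ne', ← Real.log_mul hb.ne' h1a.ne']
  exact Real.log_le_log (by positivity) (by nlinarith)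

lemma convFD : ConvexOn ℝ (Set.Icc (0:ℝ) 1)
    (fun t => t * Real.log t + (1 - t) * Real.log (1 - t)) := by
  have hc : Continuous (fun t : ℝ => t * Real.log t + (1 - t) * Real.log (1 - t)) := by
    exact Real.continuous_mul_log.add
      (Real.continuous_mul_log.comp (continuous_const.sub continuous_id))
  have hder : ∀ x ∈ interior (Set.Icc (0:ℝ) 1),
      HasDerivAt (fun t => t * Real.log t + (1 - t) * Real.log (1 - t))
        (Real.log x - Real.log (1 - x)) x := by
    intro x hx
    rw [interior_Icc, mem_Ioo] at hx
    have h1 : HasDerivAt (fun t : ℝ => t * Real.log t) (Real.log x + 1) x :=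
      Real.hasDerivAt_mul_log hx.1.ne'
    have h2 : HasDerivAt (fun t : ℝ => (1 - t) * Real.log (1 - t))
        ((Real.log (1 - x) + 1) * (-1)) x := by
      have hin : HasDerivAt (fun t : ℝ => 1 - t) (-1) x := by
        simpa using (hasDerivAt_id x).const_sub 1
      exact (Real.hasDerivAt_mul_log (by linarith [hx.2] : (1:ℝ) - x ≠ 0)).comp x hin
    have := h1.add h2
    exact this.congr_deriv (by ring)
  have hdiff : DifferentiableOn ℝ (fun t => t * Real.log t + (1 - t) * Real.log (1 - t))
      (interior (Set.Icc (0:ℝ) 1)) :=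
    fun x hx => (hder x hx).differentiableAt.differentiableWithinAt
  refine MonotoneOn.convexOn_of_deriv (convex_Icc 0 1) hc.continuousOn hdiff ?_
  intro a ha b hb hab
  rw [(hder a ha).deriv, (hder b hb).deriv]
  rw [interior_Icc, mem_Ioo] at ha hb
  have : Real.log a ≤ Real.log b := Real.log_le_log ha.1 hab
  have : Real.log (1 - b) ≤ Real.log (1 - a) :=
    Real.log_le_log (by linarith [hb.2]) (by linarith)
  linarith [Real.log_le_log ha.1 hab]

lemma serSum_eq_of_tendsto {β : ℕ → EReal} {l : EReal}
    (h : Tendsto (fun N => ∑ k ∈ Finset.range N, β k) atTop (nhds l)) : serSum β = l := by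
  have he : ∃ l : EReal, Tendsto (fun N => ∑ k ∈ Finset.range N, β k) atTop (nhds l) := ⟨l, h⟩
  rw [serSum, dif_pos he]
  exact tendsto_nhds_unique he.choose_spec h

lemma ereal_sum_ne_bot {s : Finset ℕ} {β : ℕ → EReal} (h : ∀ i, β i ≠ ⊥) :
    ∑ i ∈ s, β i ≠ ⊥ := by
  classical
  induction s using Finset.induction_on with
  | empty => simp
  | insert _ _ hni ih =>
      rw [Finset.sum_insert hni]
      simp only [ne_eq, EReal.add_eq_bot_iff]
      push_neg
      exact ⟨h _, ih⟩

lemma ereal_sum_eq_top {s : Finset ℕ} {β : ℕ → EReal} (h : ∀ i, β i ≠ ⊥) {i₀ : ℕ}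
    (hi₀ : i₀ ∈ s) (htop : β i₀ = ⊤) : ∑ i ∈ s, β i = ⊤ := by
  classical
  rw [← Finset.add_sum_erase _ _ hi₀, htop]
  exact EReal.top_add_of_ne_bot (ereal_sum_ne_bot h)

/-- If some term is `⊤` (and none is `⊥`), the series sums to `⊤`. -/
lemma serSum_eq_top {β : ℕ → EReal} (h : ∀ i, β i ≠ ⊥) {i₀ : ℕ} (htop : β i₀ = ⊤) :
    serSum β = ⊤ := by
  have hev : ∀ N, i₀ < N → ∑ k ∈ Finset.range N, β k = ⊤ := fun N hN =>
    ereal_sum_eq_top h (Finset.mem_range.2 hN) htop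
  rw [serSum]
  split_ifs with hc
  · have h1 : Tendsto (fun N => ∑ k ∈ Finset.range N, β k) atTop (nhds (⊤ : EReal)) := by
      refine Tendsto.congr' ?_ tendsto_const_nhds
      filter_upwards [eventually_gt_atTop i₀] with N hN
      exact (hev N hN).symm
    exact tendsto_nhds_unique hc.choose_spec h1
  · rfl

/-- An eventually-antitone real sequence, viewed in `EReal`, has a limit. -/
lemma exists_ereal_limit {a : ℕ → ℝ} {K : ℕ} (h : ∀ n, K ≤ n → a (n + 1) ≤ a n) :
    ∃ l : EReal, Tendsto (fun n => ((a n : EReal))) atTop (nhds l) := by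
  set g : ℕ → EReal := fun n => ((a (n + K) : EReal)) with hg
  have hanti : Antitone g := by
    refine antitone_nat_of_succ_le fun n => ?_
    have := h (n + K) (Nat.le_add_left _ _)
    refine EReal.coe_le_coe_iff.2 ?_
    simpa [Nat.add_right_comm] using this
  have := tendsto_atTop_iInf hanti
  exact ⟨_, (tendsto_add_atTop_iff_nat K).1 this⟩
lemma coe_sum_ereal (s : Finset ℕ) (a : ℕ → ℝ) :
    ((∑ i ∈ s, a i : ℝ) : EReal) = ∑ i ∈ s, ((a i : EReal)) :=
  map_sum (⟨⟨(fun x : ℝ => (x : EReal)), EReal.coe_zero⟩, EReal.coe_add⟩ : ℝ →+ EReal) a s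

lemma ereal_le_coe_of_forall {x : EReal} {c : ℝ} (h : ∀ ε : ℝ, 0 < ε → x ≤ ((c + ε : ℝ) : EReal)) :
    x ≤ (c : EReal) := by
  by_contra hlt
  push_neg at hlt
  obtain ⟨y, hy1, hy2⟩ := EReal.lt_iff_exists_real_btwn.1 hlt
  have := h (y - c) (by exact_mod_cast sub_pos.2 (EReal.coe_lt_coe_iff.1 hy1))
  have h2 : ((c + (y - c) : ℝ) : EReal) = (y : EReal) := by norm_num
  rw [h2] at this
  exact absurd (this.trans_lt hy2) (lt_irrefl _)

section Entropy

variable {p σ : ℕ → ℝ} {W : ℝ → EReal} {f : ℝ → ℝ} {D : Set ℝ}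
variable (hp : ∀ n, 1 ≤ p n)
variable (hWD : ∀ t ∈ D, W t = ((f t : ℝ) : EReal)) (hWD' : ∀ t ∉ D, W t = ⊤)
variable (hD12 : Set.Icc (0:ℝ) (1/2) ⊆ D)
variable (hfle : ∀ t ∈ D, t ≤ 1 → f t ≤ t * Real.log t)

/-- The EReal term sequence. -/
noncomputable def entTerm (p : ℕ → ℝ) (W : ℝ → EReal) (w : ℕ → ℝ) : ℕ → EReal :=
  fun n => ((p n : ℝ) : EReal) * W (w n / p n)

/-- The real partial sums. -/
noncomputable def entPart (p : ℕ → ℝ) (f : ℝ → ℝ) (w : ℕ → ℝ) : ℕ → ℝ :=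
  fun N => ∑ k ∈ Finset.range N, p k * f (w k / p k)

include hp hWD hWD' in
lemma entTerm_ne_bot (w : ℕ → ℝ) (n : ℕ) : entTerm p W w n ≠ ⊥ := by
  have hpn : (0:ℝ) < p n := lt_of_lt_of_le one_pos (hp n)
  by_cases hmem : w n / p n ∈ D
  · rw [entTerm, hWD _ hmem, ← EReal.coe_mul]; exact EReal.coe_ne_bot _
  · rw [entTerm, hWD' _ hmem, EReal.mul_top_of_pos (by exact_mod_cast hpn)]
    simp

include hp hWD hWD' in
lemma entTerm_real {w : ℕ → ℝ} {r : ℝ} (h : serSum (entTerm p W w) ≤ (r : EReal)) (n : ℕ) :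
    w n / p n ∈ D ∧ entTerm p W w n = ((p n * f (w n / p n) : ℝ) : EReal) := by
  have hpn : (0:ℝ) < p n := lt_of_lt_of_le one_pos (hp n)
  by_cases hmem : w n / p n ∈ D
  · exact ⟨hmem, by rw [entTerm, hWD _ hmem, ← EReal.coe_mul]⟩
  · exfalso
    have htop : entTerm p W w n = ⊤ := by
      rw [entTerm, hWD' _ hmem, EReal.mul_top_of_pos (by exact_mod_cast hpn)]
    rw [serSum_eq_top (entTerm_ne_bot hp hWD hWD' w) htop] at h
    exact absurd (lt_of_le_of_lt h (EReal.coe_lt_top r)) (lt_irrefl _)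

include hp hWD hfle in
/-- For a nonnegative summable-to-`u` sequence with arguments in `D`, the entropy series has a
limit `l = serSum`, and eventual bounds on real partial sums bound it. -/
lemma serSum_le_of_partial {w : ℕ → ℝ} {u c : ℝ}
    (hnn : ∀ n, 0 ≤ w n)
    (hsum : Tendsto (fun N => ∑ k ∈ Finset.range N, w k) atTop (nhds u))
    (hmem : ∀ n, w n / p n ∈ D)
    (hbd : ∀ᶠ N in atTop, entPart p f w N ≤ c) :
    serSum (entTerm p W w) ≤ (c : EReal) := by
  -- terms tend to zero
  have hterm : Tendsto w atTop (nhds 0) := by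
    have h1 : Tendsto (fun N => ∑ k ∈ Finset.range (N + 1), w k) atTop (nhds u) :=
      (tendsto_add_atTop_iff_nat 1).2 hsum
    have h2 := h1.sub hsum
    rw [sub_self] at h2
    refine h2.congr fun n => ?_
    rw [Finset.sum_range_succ]; ring
  have hev : ∀ᶠ n in atTop, p n * f (w n / p n) ≤ 0 := by
    filter_upwards [hterm.eventually (eventually_le_nhds (by norm_num : (0:ℝ) < 1/2))] with n hn
    have hpn : (0:ℝ) < p n := lt_of_lt_of_le one_pos (hp n)
    have ht0 : 0 ≤ w n / p n := div_nonneg (hnn n) hpn.le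
    have ht1 : w n / p n ≤ 1/2 := le_trans (div_le_self (hnn n) (hp n)) hn
    have := hfle _ (hmem n) (by linarith)
    have hlog : w n / p n * Real.log (w n / p n) ≤ 0 :=
      Real.mul_log_nonpos ht0 (by linarith)
    nlinarith
  obtain ⟨K, hK⟩ := eventually_atTop.1 hev
  -- partial sums of entTerm are the coe of entPart
  have hcoe : ∀ N, ∑ k ∈ Finset.range N, entTerm p W w k = ((entPart p f w N : ℝ) : EReal) := by
    intro N
    rw [entPart, coe_sum_ereal]
    refine Finset.sum_congr rfl fun k _ => ?_
    rw [entTerm, hWD _ (hmem k), ← EReal.coe_mul]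
  have hanti : ∀ n, K ≤ n → entPart p f w (n + 1) ≤ entPart p f w n := by
    intro n hn
    have : entPart p f w (n + 1) = entPart p f w n + p n * f (w n / p n) := by
      rw [entPart, entPart, Finset.sum_range_succ]
    rw [this]
    linarith [hK n hn]
  obtain ⟨l, hl⟩ := exists_ereal_limit hanti
  have hl' : Tendsto (fun N => ∑ k ∈ Finset.range N, entTerm p W w k) atTop (nhds l) := by
    refine Tendsto.congr (fun N => (hcoe N).symm) hl
  rw [serSum_eq_of_tendsto hl']
  refine le_of_tendsto hl ?_
  filter_upwards [hbd] with N hN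
  exact EReal.coe_le_coe_iff.2 hN

end Entropy

section Entropy2

variable {p σ : ℕ → ℝ} {W : ℝ → EReal} {f : ℝ → ℝ} {D : Set ℝ}
variable (hp : ∀ n, 1 ≤ p n)
variable (hWD : ∀ t ∈ D, W t = ((f t : ℝ) : EReal)) (hWD' : ∀ t ∉ D, W t = ⊤)
variable (hfle : ∀ t ∈ D, t ≤ 1 → f t ≤ t * Real.log t)

include hp hWD hWD' hfle in
lemma mixing (hconv : ConvexOn ℝ D f) {w1 w2 : ℕ → ℝ} {u1 v1 u2 v2 r1 r2 t : ℝ}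
    (ht0 : 0 ≤ t) (ht1 : t ≤ 1)
    (h1 : w1 ∈ Sfeas σ u1 v1) (h2 : w2 ∈ Sfeas σ u2 v2)
    (hs1 : serSum (entTerm p W w1) ≤ (r1 : EReal))
    (hs2 : serSum (entTerm p W w2) ≤ (r2 : EReal)) :
    (fun n => t * w1 n + (1 - t) * w2 n) ∈
        Sfeas σ (t * u1 + (1 - t) * u2) (t * v1 + (1 - t) * v2) ∧
    serSum (entTerm p W (fun n => t * w1 n + (1 - t) * w2 n)) ≤
      ((t * r1 + (1 - t) * r2 : ℝ) : EReal) := by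
  have ht1' : 0 ≤ 1 - t := by linarith
  have hpn : ∀ n, (0:ℝ) < p n := fun n => lt_of_lt_of_le one_pos (hp n)
  set wm : ℕ → ℝ := fun n => t * w1 n + (1 - t) * w2 n with hwm
  have hmemD1 := fun n => (entTerm_real hp hWD hWD' (f := f) hs1 n).1
  have hmemD2 := fun n => (entTerm_real hp hWD hWD' (f := f) hs2 n).1
  have hargm : ∀ n, wm n / p n = t * (w1 n / p n) + (1 - t) * (w2 n / p n) := by
    intro n; field_simp [hwm]; rfl
  have hmemDm : ∀ n, wm n / p n ∈ D := by
    intro n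
    rw [hargm n]
    exact hconv.1 (hmemD1 n) (hmemD2 n) ht0 ht1' (by ring)
  have hnnm : ∀ n, 0 ≤ wm n := fun n =>
    add_nonneg (mul_nonneg ht0 (h1.1 n)) (mul_nonneg ht1' (h2.1 n))
  have hfeas : wm ∈ Sfeas σ (t * u1 + (1 - t) * u2) (t * v1 + (1 - t) * v2) := by
    refine ⟨hnnm, ?_, ?_⟩
    · have := (h1.2.1.const_mul t).add (h2.2.1.const_mul (1 - t))
      refine this.congr fun N => ?_
      rw [Finset.mul_sum, Finset.mul_sum, ← Finset.sum_add_distrib]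
    · have := (h1.2.2.const_mul t).add (h2.2.2.const_mul (1 - t))
      refine this.congr fun N => ?_
      rw [Finset.mul_sum, Finset.mul_sum, ← Finset.sum_add_distrib]
      exact Finset.sum_congr rfl fun k _ => by ring
  refine ⟨hfeas, ?_⟩
  -- limits of the two partial sums
  have hlim : ∀ (w : ℕ → ℝ) (r : ℝ), serSum (entTerm p W w) ≤ (r : EReal) →
      Tendsto (fun N => ∑ k ∈ Finset.range N, entTerm p W w k) atTop
        (nhds (serSum (entTerm p W w))) := by
    intro w r hs
    have he : ∃ l : EReal,
        Tendsto (fun N => ∑ k ∈ Finset.range N, entTerm p W w k) atTop (nhds l) := by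
      by_contra hne
      rw [serSum, dif_neg hne] at hs
      exact absurd (lt_of_le_of_lt hs (EReal.coe_lt_top r)) (lt_irrefl _)
    obtain ⟨l, hl⟩ := he
    rwa [serSum_eq_of_tendsto hl]
  have hcoe : ∀ w : ℕ → ℝ, (∀ n, w n / p n ∈ D) → ∀ N,
      ∑ k ∈ Finset.range N, entTerm p W w k = ((entPart p f w N : ℝ) : EReal) := by
    intro w hmem N
    rw [entPart, coe_sum_ereal]
    exact Finset.sum_congr rfl fun k _ => by rw [entTerm, hWD _ (hmem k), ← EReal.coe_mul]
  refine ereal_le_coe_of_forall fun ε hε => ?_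
  have hev1 : ∀ᶠ N in atTop, entPart p f w1 N ≤ r1 + ε := by
    have h1' := (hlim w1 r1 hs1).eventually_lt_const
      (lt_of_le_of_lt hs1 (EReal.coe_lt_coe_iff.2 (by linarith : r1 < r1 + ε)))
    filter_upwards [h1'] with N hN
    rw [hcoe w1 hmemD1 N] at hN
    exact (EReal.coe_lt_coe_iff.1 hN).le
  have hev2 : ∀ᶠ N in atTop, entPart p f w2 N ≤ r2 + ε := by
    have h2' := (hlim w2 r2 hs2).eventually_lt_const
      (lt_of_le_of_lt hs2 (EReal.coe_lt_coe_iff.2 (by linarith : r2 < r2 + ε)))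
    filter_upwards [h2'] with N hN
    rw [hcoe w2 hmemD2 N] at hN
    exact (EReal.coe_lt_coe_iff.1 hN).le
  have hptbd : ∀ᶠ N in atTop,
      entPart p f wm N ≤ t * r1 + (1 - t) * r2 + ε := by
    filter_upwards [hev1, hev2] with N hN1 hN2
    have hterm : ∀ k, p k * f (wm k / p k) ≤
        t * (p k * f (w1 k / p k)) + (1 - t) * (p k * f (w2 k / p k)) := by
      intro k
      have hcv := hconv.2 (hmemD1 k) (hmemD2 k) ht0 ht1' (by ring : t + (1 - t) = 1)
      have : f (wm k / p k) ≤ t * f (w1 k / p k) + (1 - t) * f (w2 k / p k) := by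
        rw [hargm k]; simpa [smul_eq_mul] using hcv
      nlinarith [(hpn k).le, this]
    have hsum : entPart p f wm N ≤ t * entPart p f w1 N + (1 - t) * entPart p f w2 N := by
      rw [entPart, entPart, entPart, Finset.mul_sum, Finset.mul_sum, ← Finset.sum_add_distrib]
      exact Finset.sum_le_sum fun k _ => hterm k
    calc entPart p f wm N ≤ t * entPart p f w1 N + (1 - t) * entPart p f w2 N := hsum
      _ ≤ t * (r1 + ε) + (1 - t) * (r2 + ε) := by
          exact add_le_add (mul_le_mul_of_nonneg_left hN1 ht0)
            (mul_le_mul_of_nonneg_left hN2 ht1')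
      _ = t * r1 + (1 - t) * r2 + ε := by ring
  exact serSum_le_of_partial hp hWD hfle hnnm hfeas.2.1 hmemDm hptbd

include hp hWD in
lemma finsupp_lemma (h0D : (0:ℝ) ∈ D) (hf0 : f 0 = 0) (m : ℕ) (τ : ℕ → ℝ)
    (hτ : ∀ k, 0 ≤ τ k) (hτD : ∀ k, τ k ∈ D) :
    (fun k => if k < m then p k * τ k else 0) ∈
      Sfeas σ (∑ k ∈ Finset.range m, p k * τ k) (∑ k ∈ Finset.range m, σ k * (p k * τ k)) ∧
    serSum (entTerm p W (fun k => if k < m then p k * τ k else 0)) =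
      ((∑ k ∈ Finset.range m, p k * f (τ k) : ℝ) : EReal) := by
  have hpn : ∀ n, (0:ℝ) < p n := fun n => lt_of_lt_of_le one_pos (hp n)
  set w : ℕ → ℝ := fun k => if k < m then p k * τ k else 0 with hw
  have hnn : ∀ n, 0 ≤ w n := by
    intro n; rw [hw]; dsimp only
    split_ifs
    · exact mul_nonneg (hpn n).le (hτ n)
    · exact le_refl 0
  have harg : ∀ n, w n / p n = if n < m then τ n else 0 := by
    intro n; rw [hw]; dsimp only
    split_ifs
    · rw [mul_div_cancel_left₀ _ (hpn n).ne']
    · exact zero_div _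
  have hargD : ∀ n, w n / p n ∈ D := by
    intro n; rw [harg n]; split_ifs
    · exact hτD n
    · exact h0D
  have hconst : ∀ (a : ℕ → ℝ), ∀ N, m ≤ N →
      ∑ k ∈ Finset.range N, (if k < m then a k else 0) = ∑ k ∈ Finset.range m, a k := by
    intro a N hmN
    rw [← Finset.sum_subset (Finset.range_subset_range.2 hmN)]
    · exact Finset.sum_congr rfl fun k hk => if_pos (Finset.mem_range.1 hk)
    · intro x _ hx
      exact if_neg (fun hxm => hx (Finset.mem_range.2 hxm))
  constructor
  · refine ⟨hnn, ?_, ?_⟩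
    · refine tendsto_atTop_of_eventually_const (i₀ := m) fun N hN => ?_
      exact hconst (fun k => p k * τ k) N hN
    · refine tendsto_atTop_of_eventually_const (i₀ := m) fun N hN => ?_
      rw [← hconst (fun k => σ k * (p k * τ k)) N hN]
      refine Finset.sum_congr rfl fun k _ => ?_
      rw [hw]; dsimp only; split_ifs <;> ring
  · refine serSum_eq_of_tendsto ?_
    refine tendsto_atTop_of_eventually_const (i₀ := m) fun N hN => ?_
    have : ∀ k, entTerm p W w k = (((if k < m then p k * f (τ k) else 0) : ℝ) : EReal) := by
      intro k
      rw [entTerm, hWD _ (hargD k), ← EReal.coe_mul, harg k]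
      split_ifs
      · rfl
      · rw [hf0, mul_zero]
    calc ∑ k ∈ Finset.range N, entTerm p W w k
        = ((∑ k ∈ Finset.range N, (if k < m then p k * f (τ k) else 0) : ℝ) : EReal) := by
          rw [coe_sum_ereal]; exact Finset.sum_congr rfl fun k _ => this k
      _ = ((∑ k ∈ Finset.range m, p k * f (τ k) : ℝ) : EReal) := by
          rw [hconst (fun k => p k * f (τ k)) N hN]

end Entropy2

lemma Hval_eq (p σ : ℕ → ℝ) (W : ℝ → EReal) (u v : ℝ) :
    Hval p σ W u v = sInf ((fun w => serSum (entTerm p W w)) '' Sfeas σ u v) := rfl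

set_option maxHeartbeats 2000000 in
lemma key (p σ : ℕ → ℝ) (hp : ∀ n, 1 ≤ p n)
    (hdiv : ∀ x : ℝ, ¬ Summable fun n => p n * Real.exp (σ n * x))
    (W : ℝ → EReal) (f : ℝ → ℝ) (D : Set ℝ)
    (hWD : ∀ t ∈ D, W t = ((f t : ℝ) : EReal)) (hWD' : ∀ t ∉ D, W t = ⊤)
    (hconv : ConvexOn ℝ D f) (hD12 : Set.Icc (0:ℝ) (1/2) ⊆ D)
    (hf0 : f 0 = 0) (hfle : ∀ t ∈ D, t ≤ 1 → f t ≤ t * Real.log t) :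
    ∀ z ∈ interior {z : ℝ × ℝ | Hval p σ W z.1 z.2 < ⊤}, Hval p σ W z.1 z.2 = ⊥ := by
  intro z hz
  by_contra hbot
  have h0D : (0:ℝ) ∈ D := hD12 ⟨le_refl 0, by norm_num⟩
  have hhalfD : (1/2:ℝ) ∈ D := hD12 ⟨by norm_num, le_refl _⟩
  have hzS : Hval p σ W z.1 z.2 < ⊤ := by
    have := interior_subset hz
    simpa using this
  set h0 : ℝ := (Hval p σ W z.1 z.2).toReal with hh0
  have hz0 : Hval p σ W z.1 z.2 = ((h0 : ℝ) : EReal) := (EReal.coe_toReal hzS.ne hbot).symm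
  obtain ⟨ε, hε, hball⟩ := Metric.mem_nhds_iff.1 (mem_interior_iff_mem_nhds.1 hz)
  set a : ℝ := ε / 2 with hadef
  have ha : 0 < a := by positivity
  -- extract witnesses at points of the domain
  have hwit : ∀ u v : ℝ, Hval p σ W u v < ⊤ →
      ∃ w, w ∈ Sfeas σ u v ∧ ∃ r : ℝ, serSum (entTerm p W w) ≤ (r : EReal) := by
    intro u v h
    rw [Hval_eq] at h
    obtain ⟨b, hbS, hb⟩ := sInf_lt_iff.1 h
    obtain ⟨w, hw, rfl⟩ := hbS
    obtain ⟨r, hr, _⟩ := EReal.lt_iff_exists_real_btwn.1 hb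
    exact ⟨w, hw, r, hr.le⟩
  -- corner points are in the domain
  have hcorner : ∀ e1 e2 : ℝ, |e1| = 1 → |e2| = 1 →
      Hval p σ W (z.1 + e1 * a) (z.2 + e2 * a) < ⊤ := by
    intro e1 e2 he1 he2
    have : ((z.1 + e1 * a, z.2 + e2 * a) : ℝ × ℝ) ∈ Metric.ball z ε := by
      rw [Metric.mem_ball, Prod.dist_eq]
      have d1 : dist (z.1 + e1 * a) z.1 < ε := by
        rw [Real.dist_eq]
        have : |z.1 + e1 * a - z.1| = |e1 * a| := by ring_nf
        rw [this, abs_mul, he1, one_mul, abs_of_pos ha]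
        rw [hadef]; linarith
      have d2 : dist (z.2 + e2 * a) z.2 < ε := by
        rw [Real.dist_eq]
        have : |z.2 + e2 * a - z.2| = |e2 * a| := by ring_nf
        rw [this, abs_mul, he2, one_mul, abs_of_pos ha]
        rw [hadef]; linarith
      exact max_lt d1 d2
    exact hball this
  obtain ⟨wpp, hwpp, rpp, hrpp⟩ := hwit _ _ (hcorner 1 1 (by norm_num) (by norm_num))
  obtain ⟨wpm, hwpm, rpm, hrpm⟩ := hwit _ _ (hcorner 1 (-1) (by norm_num) (by norm_num))
  obtain ⟨wmp, hwmp, rmp, hrmp⟩ := hwit _ _ (hcorner (-1) 1 (by norm_num) (by norm_num))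
  obtain ⟨wmm, hwmm, rmm, hrmm⟩ := hwit _ _ (hcorner (-1) (-1) (by norm_num) (by norm_num))
  set C : ℝ := max (max rpp rpm) (max rmp rmm) with hC
  have hrpp' : serSum (entTerm p W wpp) ≤ (C : EReal) :=
    le_trans hrpp (EReal.coe_le_coe_iff.2 (le_trans (le_max_left _ _) (le_max_left _ _)))
  have hrpm' : serSum (entTerm p W wpm) ≤ (C : EReal) :=
    le_trans hrpm (EReal.coe_le_coe_iff.2 (le_trans (le_max_right _ _) (le_max_left _ _)))
  have hrmp' : serSum (entTerm p W wmp) ≤ (C : EReal) :=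
    le_trans hrmp (EReal.coe_le_coe_iff.2 (le_trans (le_max_left _ _) (le_max_right _ _)))
  have hrmm' : serSum (entTerm p W wmm) ≤ (C : EReal) :=
    le_trans hrmm (EReal.coe_le_coe_iff.2 (le_trans (le_max_right _ _) (le_max_right _ _)))
  -- uniform bound on a small square around z
  have hU : ∀ s t' : ℝ, |s| ≤ a / 2 → |t'| ≤ a / 2 →
      ∃ w, w ∈ Sfeas σ (z.1 + s) (z.2 + t') ∧ serSum (entTerm p W w) ≤ (C : EReal) := by
    intro s t' hs ht'
    have hsl := abs_le.1 hs
    have htl := abs_le.1 ht'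
    set lam : ℝ := (t' + a) / (2 * a) with hlam
    have hlam0 : 0 ≤ lam := by
      apply div_nonneg; linarith [htl.1]; linarith
    have hlam1 : lam ≤ 1 := by
      rw [hlam, div_le_one (by linarith)]; linarith [htl.2]
    have hCC : ∀ t : ℝ, t * C + (1 - t) * C = C := fun t => by ring
    obtain ⟨hm1, hb1⟩ := mixing hp hWD hWD' hfle hconv hlam0 hlam1 hwpp hwpm hrpp' hrpm'
    rw [hCC] at hb1
    have e1 : lam * (z.1 + 1 * a) + (1 - lam) * (z.1 + 1 * a) = z.1 + a := by ring
    have e2 : lam * (z.2 + 1 * a) + (1 - lam) * (z.2 + -1 * a) = z.2 + t' := by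
      rw [hlam]; field_simp; ring
    rw [e1, e2] at hm1
    obtain ⟨hm2, hb2⟩ := mixing hp hWD hWD' hfle hconv hlam0 hlam1 hwmp hwmm hrmp' hrmm'
    rw [hCC] at hb2
    have e3 : lam * (z.1 + -1 * a) + (1 - lam) * (z.1 + -1 * a) = z.1 - a := by ring
    have e4 : lam * (z.2 + 1 * a) + (1 - lam) * (z.2 + -1 * a) = z.2 + t' := by
      rw [hlam]; field_simp; ring
    rw [e3, e4] at hm2
    set mu : ℝ := (s + a) / (2 * a) with hmu
    have hmu0 : 0 ≤ mu := by
      apply div_nonneg; linarith [hsl.1]; linarith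
    have hmu1 : mu ≤ 1 := by
      rw [hmu, div_le_one (by linarith)]; linarith [hsl.2]
    obtain ⟨hm3, hb3⟩ := mixing hp hWD hWD' hfle hconv hmu0 hmu1 hm1 hm2 hb1 hb2
    rw [hCC] at hb3
    have e5 : mu * (z.1 + a) + (1 - mu) * (z.1 - a) = z.1 + s := by
      rw [hmu]; field_simp; ring
    have e6 : mu * (z.2 + t') + (1 - mu) * (z.2 + t') = z.2 + t' := by ring
    rw [e5, e6] at hm3
    exact ⟨_, hm3, hb3⟩
  -- the achievable set A
  set A : Set ((ℝ × ℝ) × ℝ) :=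
    {q | ∃ w, w ∈ Sfeas σ q.1.1 q.1.2 ∧ serSum (entTerm p W w) ≤ (q.2 : EReal)} with hA
  have hconvA : Convex ℝ A := by
    intro q1 hq1 q2 hq2 ta tb hta htb htab
    obtain ⟨w1, hw1, hs1⟩ := hq1
    obtain ⟨w2, hw2, hs2⟩ := hq2
    have htb' : tb = 1 - ta := by linarith
    subst htb'
    obtain ⟨hmem, hbd⟩ := mixing hp hWD hWD' hfle hconv hta (by linarith) hw1 hw2 hs1 hs2
    exact ⟨_, hmem, hbd⟩
  -- interior point of A
  have hx0 : (((z.1, z.2), C + 1) : (ℝ × ℝ) × ℝ) ∈ interior A := by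
    have hUopen : IsOpen ((Metric.ball z (a / 4)) ×ˢ (Set.Ioi C)) :=
      Metric.isOpen_ball.prod isOpen_Ioi
    have hUA : (Metric.ball z (a / 4)) ×ˢ (Set.Ioi C) ⊆ A := by
      rintro ⟨z', r⟩ ⟨hz', hr⟩
      have hd := Metric.mem_ball.1 hz'
      rw [Prod.dist_eq, max_lt_iff] at hd
      have h1 : |z'.1 - z.1| ≤ a / 2 := by
        rw [← Real.dist_eq]; linarith [hd.1]
      have h2 : |z'.2 - z.2| ≤ a / 2 := by
        rw [← Real.dist_eq]; linarith [hd.2]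
      obtain ⟨w, hw, hwb⟩ := hU _ _ h1 h2
      have ez : (z.1 + (z'.1 - z.1), z.2 + (z'.2 - z.2)) = z' := by
        ext <;> dsimp <;> ring
      refine ⟨w, ?_, le_trans hwb (EReal.coe_le_coe_iff.2 (le_of_lt hr))⟩
      have := hw
      rw [show z.1 + (z'.1 - z.1) = z'.1 by ring, show z.2 + (z'.2 - z.2) = z'.2 by ring] at this
      exact this
    have hmem : (((z.1, z.2), C + 1) : (ℝ × ℝ) × ℝ) ∈
        (Metric.ball z (a / 4)) ×ˢ (Set.Ioi C) := by
      constructor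
      · simp only [Metric.mem_ball]
        have : (z.1, z.2) = z := by ext <;> rfl
        rw [this, dist_self]; positivity
      · exact lt_add_one C
    exact (hUopen.subset_interior_iff.2 hUA) hmem
  -- the reference point is not in A
  have hq0 : (((z.1, z.2), h0 - 1) : (ℝ × ℝ) × ℝ) ∉ A := by
    rintro ⟨w, hw, hwb⟩
    have hle : Hval p σ W z.1 z.2 ≤ ((h0 - 1 : ℝ) : EReal) := by
      rw [Hval_eq]
      exact le_trans (sInf_le (Set.mem_image_of_mem _ hw)) hwb
    rw [hz0] at hle
    have := EReal.coe_le_coe_iff.1 hle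
    linarith
  -- separation
  obtain ⟨φ, hφ⟩ := geometric_hahn_banach_open_point (hconvA.interior) isOpen_interior
    (fun hq => hq0 (interior_subset hq))
  -- extend the separation to all of A
  have hφle : ∀ q ∈ A, φ q ≤ φ (((z.1, z.2), h0 - 1)) := by
    intro q hq
    by_contra hgt
    push_neg at hgt
    set x0 : (ℝ × ℝ) × ℝ := ((z.1, z.2), C + 1) with hx0def
    set d : ℝ := φ q - φ (((z.1, z.2), h0 - 1)) with hd
    have hdpos : 0 < d := by rw [hd]; linarith
    set θ : ℝ := min 1 (d / (1 + |φ q - φ x0|)) with hθ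
    have hden : 0 < 1 + |φ q - φ x0| := by positivity
    have hθpos : 0 < θ := lt_min one_pos (by positivity)
    have hθ1 : θ ≤ 1 := min_le_left _ _
    have hcombo : θ • x0 + (1 - θ) • q ∈ interior A :=
      hconvA.combo_interior_closure_mem_interior hx0 (subset_closure hq) hθpos
        (by linarith) (by ring)
    have hlt := hφ _ hcombo
    rw [map_add, map_smul, map_smul, smul_eq_mul, smul_eq_mul] at hlt
    -- θ * φ x0 + (1 - θ) * φ q < φ q0 = φ q - d
    have hθd : θ * |φ q - φ x0| ≤ d * (|φ q - φ x0| / (1 + |φ q - φ x0|)) := by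
      have : θ ≤ d / (1 + |φ q - φ x0|) := min_le_right _ _
      calc θ * |φ q - φ x0| ≤ (d / (1 + |φ q - φ x0|)) * |φ q - φ x0| :=
            mul_le_mul_of_nonneg_right this (abs_nonneg _)
        _ = d * (|φ q - φ x0| / (1 + |φ q - φ x0|)) := by ring
      done
    have hfrac : |φ q - φ x0| / (1 + |φ q - φ x0|) < 1 := by
      rw [div_lt_one hden]; linarith
    have h1 : θ * (φ q - φ x0) ≤ θ * |φ q - φ x0| :=
      mul_le_mul_of_nonneg_left (le_abs_self _) hθpos.le
    have h2 : d * (|φ q - φ x0| / (1 + |φ q - φ x0|)) < d :=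
      by nlinarith [hdpos, hfrac, abs_nonneg (φ q - φ x0), hden]
    nlinarith [hlt, h1, hθd, h2]
  -- coefficients of the functional
  set cx : ℝ := φ (((1, 0), 0)) with hcx
  set cy : ℝ := φ (((0, 1), 0)) with hcy
  set cr : ℝ := φ (((0, 0), 1)) with hcr
  have hdecomp : ∀ q : (ℝ × ℝ) × ℝ, φ q = cx * q.1.1 + cy * q.1.2 + cr * q.2 := by
    intro q
    have hq : q = q.1.1 • ((((1:ℝ), (0:ℝ)), (0:ℝ))) + q.1.2 • ((((0:ℝ), (1:ℝ)), (0:ℝ)))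
        + q.2 • ((((0:ℝ), (0:ℝ)), (1:ℝ))) := by
      ext <;> simp
    have h2 : φ q = q.1.1 * cx + q.1.2 * cy + q.2 * cr := by
      conv_lhs => rw [hq]
      rw [map_add, map_add, map_smul, map_smul, map_smul]
      simp only [smul_eq_mul, hcx, hcy, hcr]
    rw [h2]; ring
  -- points just above the value at z are in A
  have hAh0 : ∀ θ : ℝ, 0 < θ → (((z.1, z.2), h0 + θ) : (ℝ × ℝ) × ℝ) ∈ A := by
    intro θ hθ
    have hlt : Hval p σ W z.1 z.2 < ((h0 + θ : ℝ) : EReal) := by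
      rw [hz0]
      exact_mod_cast (by linarith : h0 < h0 + θ)
    rw [Hval_eq] at hlt
    obtain ⟨b, hbS, hb⟩ := sInf_lt_iff.1 hlt
    obtain ⟨w, hw, rfl⟩ := hbS
    exact ⟨w, hw, hb.le⟩
  have hcr_nonpos : cr ≤ 0 := by
    have h1 := hφle _ (hAh0 1 one_pos)
    rw [hdecomp, hdecomp] at h1
    dsimp only at h1
    linarith
  have hcrne : cr ≠ 0 := by
    intro hcr0
    by_cases hcxy : cx = 0 ∧ cy = 0
    · have hstrict := hφ _ hx0
      rw [hdecomp, hdecomp] at hstrict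
      dsimp only at hstrict
      rw [hcxy.1, hcxy.2, hcr0] at hstrict
      simp at hstrict
    · have hm : 0 < max |cx| |cy| := by
        rcases not_and_or.1 hcxy with h | h
        · exact lt_of_lt_of_le (abs_pos.2 h) (le_max_left _ _)
        · exact lt_of_lt_of_le (abs_pos.2 h) (le_max_right _ _)
      set m : ℝ := max |cx| |cy| with hmdef
      set s1 : ℝ := (a / 4) * (cx / m) with hs1
      set t1 : ℝ := (a / 4) * (cy / m) with ht1
      have hsb1 : |s1| ≤ a / 2 := by
        rw [hs1, abs_mul, abs_of_pos (by positivity : (0:ℝ) < a / 4), abs_div,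
          abs_of_pos hm]
        have h7 : |cx| / m ≤ 1 := by
          rw [div_le_one hm]; exact le_max_left _ _
        have h8 : (a/4) * (|cx|/m) ≤ (a/4) * 1 :=
          mul_le_mul_of_nonneg_left h7 (by positivity)
        linarith
      have htb1 : |t1| ≤ a / 2 := by
        rw [ht1, abs_mul, abs_of_pos (by positivity : (0:ℝ) < a / 4), abs_div,
          abs_of_pos hm]
        have h7 : |cy| / m ≤ 1 := by
          rw [div_le_one hm]; exact le_max_right _ _
        have h8 : (a/4) * (|cy|/m) ≤ (a/4) * 1 :=
          mul_le_mul_of_nonneg_left h7 (by positivity)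
        linarith
      obtain ⟨w, hw, hwb⟩ := hU s1 t1 hsb1 htb1
      have hAq : (((z.1 + s1, z.2 + t1), C + 1) : (ℝ × ℝ) × ℝ) ∈ A :=
        ⟨w, hw, le_trans hwb (EReal.coe_le_coe_iff.2 (show C ≤ C + 1 by linarith))⟩
      have h1 := hφle _ hAq
      rw [hdecomp, hdecomp] at h1
      dsimp only at h1
      rw [hcr0] at h1
      ring_nf at h1
      have h4 : 0 < cx ^ 2 + cy ^ 2 := by
        rcases not_and_or.1 hcxy with h | h <;> positivity
      have h5 : 0 < m⁻¹ := inv_pos.2 hm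
      have h6 : cx * s1 + cy * t1 = (a/4) * (cx^2+cy^2) * m⁻¹ := by rw [hs1, ht1]; ring
      have h7 : 0 < (a/4) * (cx^2+cy^2) * m⁻¹ := mul_pos (mul_pos (by linarith) h4) h5
      linarith [h1, h6, h7]
  have hcrneg : cr < 0 := lt_of_le_of_ne hcr_nonpos hcrne
  set K : ℝ := φ (((z.1, z.2), h0 - 1)) with hK
  set x : ℝ := -cx / cr with hx
  set y : ℝ := -cy / cr with hy
  set al : ℝ := K / cr with hal
  have hmin : ∀ q ∈ A, al + x * q.1.1 + y * q.1.2 ≤ q.2 := by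
    intro q hq
    have h1 := hφle q hq
    rw [hdecomp q] at h1
    have h2 : al + x * q.1.1 + y * q.1.2 = (K - cx * q.1.1 - cy * q.1.2) / cr := by
      rw [hal, hx, hy]; field_simp; ring
    rw [h2, div_le_iff_of_neg hcrneg]
    linarith [h1]
  -- single-coordinate test sequences
  have hsingle : ∀ n : ℕ, ∀ τ0 : ℝ, 0 ≤ τ0 → τ0 ∈ D →
      al + x * (p n * τ0) + y * (σ n * (p n * τ0)) ≤ p n * f τ0 := by
    intro n τ0 hτ0 hτ0D
    set τ : ℕ → ℝ := fun k => if k = n then τ0 else 0 with hτ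
    have hτnn : ∀ k, 0 ≤ τ k := by
      intro k; rw [hτ]; dsimp only; split_ifs
      · exact hτ0
      · exact le_refl 0
    have hτD : ∀ k, τ k ∈ D := by
      intro k; rw [hτ]; dsimp only; split_ifs
      · exact hτ0D
      · exact h0D
    obtain ⟨hmem, hval⟩ := finsupp_lemma hp hWD h0D hf0 (n + 1) τ hτnn hτD
    have e1 : ∑ k ∈ Finset.range (n + 1), p k * τ k = p n * τ0 := by
      rw [Finset.sum_eq_single_of_mem n (Finset.self_mem_range_succ n)]
      · simp [hτ]
      · intro b _ hbn; simp [hτ, hbn]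
    have e2 : ∑ k ∈ Finset.range (n + 1), σ k * (p k * τ k) = σ n * (p n * τ0) := by
      rw [Finset.sum_eq_single_of_mem n (Finset.self_mem_range_succ n)]
      · simp [hτ]
      · intro b _ hbn; simp [hτ, hbn]
    have e3 : ∑ k ∈ Finset.range (n + 1), p k * f (τ k) = p n * f τ0 := by
      rw [Finset.sum_eq_single_of_mem n (Finset.self_mem_range_succ n)]
      · simp [hτ]
      · intro b _ hbn; simp [hτ, hbn, hf0]
    rw [e1, e2] at hmem
    rw [e3] at hval
    have hAq : (((p n * τ0, σ n * (p n * τ0)), p n * f τ0) : (ℝ × ℝ) × ℝ) ∈ A :=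
      ⟨_, hmem, le_of_eq hval⟩
    exact hmin _ hAq
  -- uniform upper bound on x + y * σ n
  have hsbnd : ∀ n, x + y * σ n ≤ 2 * f (1/2) + 2 * |al| := by
    intro n
    have hpn : (0:ℝ) < p n := lt_of_lt_of_le one_pos (hp n)
    have h1 := hsingle n (1/2) (by norm_num) hhalfD
    have e : x * (p n * (1/2)) + y * (σ n * (p n * (1/2))) = (p n / 2) * (x + y * σ n) := by
      ring
    have h2 : (x + y * σ n) * (p n / 2) ≤ p n * f (1/2) - al := by linarith [e]
    have h3 : x + y * σ n ≤ (p n * f (1/2) - al) / (p n / 2) :=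
      (le_div_iff₀ (by positivity)).2 h2
    have h4 : (p n * f (1/2) - al) / (p n / 2) = 2 * f (1/2) - 2 * al / p n := by
      field_simp
    have h5 : -(2 * al) / p n ≤ 2 * |al| := by
      have hna : -al ≤ |al| := neg_le_abs al
      have h51 : -(2 * al) ≤ 2 * |al| := by linarith
      calc -(2 * al) / p n ≤ 2 * |al| / p n := (div_le_div_iff_of_pos_right hpn).2 h51
        _ ≤ 2 * |al| := div_le_self (by positivity) (hp n)
    rw [h4] at h3
    have h6 : -(2 * al) / p n = -(2 * al / p n) := by ring
    linarith [h5, h6]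
  -- the tilted test sequence
  set sb : ℝ := 2 * f (1/2) + 2 * |al| with hsbdef
  set κ : ℝ := min (1/2) ((1/2) * Real.exp (-sb)) with hκdef
  have hκpos : 0 < κ := lt_min (by norm_num) (by positivity)
  have hκhalf : κ ≤ 1/2 := min_le_left _ _
  set τe : ℕ → ℝ := fun n => κ * Real.exp (x + y * σ n) with hτedef
  have hτepos : ∀ n, 0 < τe n := fun n => by positivity
  have hτehalf : ∀ n, τe n ≤ 1/2 := by
    intro n
    have h1 : κ ≤ (1/2) * Real.exp (-sb) := min_le_right _ _
    have h2 : Real.exp (x + y * σ n) ≤ Real.exp sb := Real.exp_le_exp.2 (hsbnd n)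
    calc τe n = κ * Real.exp (x + y * σ n) := rfl
      _ ≤ ((1/2) * Real.exp (-sb)) * Real.exp sb :=
          mul_le_mul h1 h2 (Real.exp_pos _).le (by positivity)
      _ = 1/2 := by rw [mul_assoc, ← Real.exp_add]; norm_num
  have hτeD : ∀ n, τe n ∈ D := fun n => hD12 ⟨(hτepos n).le, hτehalf n⟩
  have hL : 0 < -Real.log κ := by
    have : Real.log κ < 0 := Real.log_neg hκpos (lt_of_le_of_lt hκhalf (by norm_num))
    linarith
  have hterm : ∀ n : ℕ, p n * (κ * (-Real.log κ) * Real.exp (x + y * σ n)) ≤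
      p n * ((x + y * σ n) * τe n - f (τe n)) := by
    intro n
    have hpn : (0:ℝ) < p n := lt_of_lt_of_le one_pos (hp n)
    refine mul_le_mul_of_nonneg_left ?_ hpn.le
    have h2 : f (τe n) ≤ τe n * Real.log (τe n) :=
      hfle _ (hτeD n) (by linarith [hτehalf n])
    have hlog : Real.log (τe n) = Real.log κ + (x + y * σ n) := by
      rw [hτedef]; dsimp only
      rw [Real.log_mul hκpos.ne' (Real.exp_ne_zero _), Real.log_exp]
    rw [hlog] at h2
    have h3 : τe n * (Real.log κ + (x + y * σ n)) =
        τe n * Real.log κ + τe n * (x + y * σ n) := by ring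
    have h4 : τe n * Real.log κ = κ * Real.exp (x + y * σ n) * Real.log κ := by
      rw [hτedef]
    have h5 : (x + y * σ n) * τe n = τe n * (x + y * σ n) := by ring
    have h6 : κ * (-Real.log κ) * Real.exp (x + y * σ n) =
        -(κ * Real.exp (x + y * σ n) * Real.log κ) := by ring
    linarith [h2, h3, h4, h5, h6]
  have hbound : ∀ m : ℕ, ∑ k ∈ Finset.range m, p k * Real.exp (x + y * σ k) ≤
      (-al) / (κ * (-Real.log κ)) := by
    intro m
    obtain ⟨hmem, hval⟩ := finsupp_lemma hp hWD h0D hf0 m τe (fun k => (hτepos k).le) hτeD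
    have hAq : (((∑ k ∈ Finset.range m, p k * τe k,
        ∑ k ∈ Finset.range m, σ k * (p k * τe k)) : ℝ × ℝ),
        (∑ k ∈ Finset.range m, p k * f (τe k))) ∈ A := ⟨_, hmem, le_of_eq hval⟩
    have h1 := hmin _ hAq
    dsimp only at h1
    have h2 : x * (∑ k ∈ Finset.range m, p k * τe k) +
        y * (∑ k ∈ Finset.range m, σ k * (p k * τe k))
        = ∑ k ∈ Finset.range m, p k * ((x + y * σ k) * τe k) := by
      rw [Finset.mul_sum, Finset.mul_sum, ← Finset.sum_add_distrib]
      exact Finset.sum_congr rfl fun k _ => by ring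
    have h3 : ∑ k ∈ Finset.range m, p k * ((x + y * σ k) * τe k - f (τe k)) ≤ -al := by
      have e : ∑ k ∈ Finset.range m, p k * ((x + y * σ k) * τe k - f (τe k))
          = ∑ k ∈ Finset.range m, p k * ((x + y * σ k) * τe k)
            - ∑ k ∈ Finset.range m, p k * f (τe k) := by
        rw [← Finset.sum_sub_distrib]
        exact Finset.sum_congr rfl fun k _ => by ring
      rw [e]
      linarith [h1, h2]
    have h4 : ∑ k ∈ Finset.range m, p k * (κ * (-Real.log κ) * Real.exp (x + y * σ k)) ≤ -al :=
      le_trans (Finset.sum_le_sum fun k _ => hterm k) h3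
    have h5 : ∑ k ∈ Finset.range m, p k * (κ * (-Real.log κ) * Real.exp (x + y * σ k))
        = (κ * (-Real.log κ)) * ∑ k ∈ Finset.range m, p k * Real.exp (x + y * σ k) := by
      rw [Finset.mul_sum]
      exact Finset.sum_congr rfl fun k _ => by ring
    rw [h5] at h4
    have hcl : 0 < κ * (-Real.log κ) := mul_pos hκpos hL
    exact (le_div_iff₀' hcl).2 h4
  have hsummable : Summable (fun n => p n * Real.exp (x + y * σ n)) :=
    summable_of_sum_range_le (fun n => mul_nonneg (le_trans zero_le_one (hp n)) (Real.exp_pos _).le) hbound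
  have hsum2 : Summable (fun n => p n * Real.exp (σ n * y)) := by
    have h1 := hsummable.mul_left (Real.exp (-x))
    refine h1.congr fun n => ?_
    rw [Real.exp_add, Real.exp_neg]
    have hne : Real.exp x ≠ 0 := Real.exp_ne_zero x
    field_simp
  exact hdiv y hsum2

end Aux

/-- If `inf σ_n < sup σ_n` and the series `Σ p_n e^{σ_n x}` diverges for every real `x`, then
`H_W = −∞` on the interior of its domain, for each of the three entropies. -/


theorem stmt10 (p σ : ℕ → ℝ) (hp : ∀ n, 1 ≤ p n)
    (hlt : (⨅ n, ((σ n : ℝ) : EReal)) < ⨆ n, ((σ n : ℝ) : EReal))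
    (hdiv : ∀ x : ℝ, ¬ Summable fun n => p n * Real.exp (σ n * x)) :
    ∀ W ∈ ({EBEe, EMBe, EFDe} : Set (ℝ → EReal)),
      ∀ z ∈ interior {z : ℝ × ℝ | Hval p σ W z.1 z.2 < ⊤},
        Hval p σ W z.1 z.2 = ⊥ := by
  intro W hW
  have hMB : ∀ z ∈ interior {z : ℝ × ℝ | Hval p σ EMBe z.1 z.2 < ⊤},
      Hval p σ EMBe z.1 z.2 = ⊥ := by
    refine key p σ hp hdiv EMBe (fun t => t * (Real.log t - 1)) (Set.Ici 0)
      (fun t ht => ?_) (fun t ht => ?_) convMB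
      (fun t ht => ht.1) (by simp) (fun t ht h1 => ?_)
    · simp only [EMBe]; rw [if_pos (show (0:ℝ) ≤ t from ht)]
    · simp only [EMBe]; rw [if_neg (show ¬ (0:ℝ) ≤ t from ht)]
    · have ht0 : (0:ℝ) ≤ t := ht
      show t * (Real.log t - 1) ≤ t * Real.log t
      rw [mul_sub, mul_one]; linarith
  have hBE : ∀ z ∈ interior {z : ℝ × ℝ | Hval p σ EBEe z.1 z.2 < ⊤},
      Hval p σ EBEe z.1 z.2 = ⊥ := by
    refine key p σ hp hdiv EBEe (fun t => t * Real.log t - (1 + t) * Real.log (1 + t))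
      (Set.Ici 0) (fun t ht => ?_) (fun t ht => ?_) convBE
      (fun t ht => ht.1) (by simp) (fun t ht h1 => ?_)
    · simp only [EBEe]; rw [if_pos (show (0:ℝ) ≤ t from ht)]
    · simp only [EBEe]; rw [if_neg (show ¬ (0:ℝ) ≤ t from ht)]
    · have ht0 : (0:ℝ) ≤ t := ht
      have hlog : 0 ≤ Real.log (1 + t) := Real.log_nonneg (by linarith)
      show t * Real.log t - (1 + t) * Real.log (1 + t) ≤ t * Real.log t
      have h2 : 0 ≤ (1 + t) * Real.log (1 + t) := mul_nonneg (by linarith) hlog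
      linarith
  have hFD : ∀ z ∈ interior {z : ℝ × ℝ | Hval p σ EFDe z.1 z.2 < ⊤},
      Hval p σ EFDe z.1 z.2 = ⊥ := by
    refine key p σ hp hdiv EFDe (fun t => t * Real.log t + (1 - t) * Real.log (1 - t))
      (Set.Icc 0 1) (fun t ht => ?_) (fun t ht => ?_) convFD
      (fun t ht => ⟨ht.1, le_trans ht.2 (by norm_num)⟩) (by simp) (fun t ht h1 => ?_)
    · simp only [EFDe]; rw [if_pos (⟨ht.1, ht.2⟩ : 0 ≤ t ∧ t ≤ 1)]
    · simp only [EFDe]; rw [if_neg (by simpa [Set.mem_Icc] using ht)]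
    · have := Real.mul_log_nonpos (by linarith [ht.2] : (0:ℝ) ≤ 1 - t)
        (by linarith [ht.1] : (1:ℝ) - t ≤ 1)
      show t * Real.log t + (1 - t) * Real.log (1 - t) ≤ t * Real.log t
      linarith
  simp only [Set.mem_insert_iff, Set.mem_singleton_iff] at hW
  rcases hW with h | h | h
  · subst h; exact hBE
  · subst h; exact hMB
  · subst h; exact hFD
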